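/- For all n ≥ 0, the number of permutations of [n] avoiding both generalized patterns 1-23 and 13-2 equals the n-th Motzkin number. -/

import Mathlib

open List

/-- The Motzkin numbers: `M 0 = 1` and
`M (n+1) = M n + Σ_{k=0}^{n-1} M k * M (n-1-k)`. -/
def motzkin : ℕ → ℕ
  | 0 => 1
  | n + 1 => motzkin n + ∑ k ∈ (Finset.range n).attach, motzkin k * motzkin (n - 1 - k)
decreasing_by
  · omega
  · have := Finset.mem_range.mp k.2; omega
  · omega


/-- list avoidance of 1-23 and 13-2 -/
def AvL (l : List ℕ) : Prop :=
  (∀ i j : ℕ, i < j → j + 1 < l.length → ¬(l[i]! < l[j]! ∧ l[j]! < l[j+1]!)) ∧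
  (∀ i j : ℕ, i + 1 < j → j < l.length → ¬(l[i]! < l[j]! ∧ l[j]! < l[i+1]!))

/-- avoiding lists that are permutations of `range n` -/
abbrev PL (n : ℕ) : Type := {l : List ℕ // l ~ List.range n ∧ AvL l}

lemma getbang_map_add (l : List ℕ) (c i : ℕ) (h : i < l.length) :
    (l.map (· + c))[i]! = l[i]! + c := by
  rw [getElem!_pos (l.map (· + c)) i (by simpa using h), getElem!_pos l i h, List.getElem_map]

lemma avl_map_add (l : List ℕ) (c : ℕ) : AvL (l.map (· + c)) ↔ AvL l := by
  constructor
  · rintro ⟨h1, h2⟩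
    constructor
    · intro i j hij hj hocc
      exact h1 i j hij (by simpa using hj)
        ⟨by rw [getbang_map_add _ _ _ (by omega), getbang_map_add _ _ _ (by omega)]; omega,
         by rw [getbang_map_add _ _ _ (by omega), getbang_map_add _ _ _ (by omega)]; omega⟩
    · intro i j hij hj hocc
      exact h2 i j hij (by simpa using hj)
        ⟨by rw [getbang_map_add _ _ _ (by omega), getbang_map_add _ _ _ (by omega)]; omega,
         by rw [getbang_map_add _ _ _ (by omega), getbang_map_add _ _ _ (by omega)]; omega⟩
  · rintro ⟨h1, h2⟩
    constructor
    · intro i j hij hj hocc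
      rw [List.length_map] at hj
      rw [getbang_map_add _ _ _ (by omega), getbang_map_add _ _ _ (by omega),
        getbang_map_add _ _ _ (by omega)] at hocc
      exact h1 i j hij hj ⟨by omega, by omega⟩
    · intro i j hij hj hocc
      rw [List.length_map] at hj
      rw [getbang_map_add _ _ _ (by omega), getbang_map_add _ _ _ (by omega),
        getbang_map_add _ _ _ (by omega)] at hocc
      exact h2 i j hij hj ⟨by omega, by omega⟩

lemma getbang_append_left (l₁ l₂ : List ℕ) (i : ℕ) (h : i < l₁.length) :
    (l₁ ++ l₂)[i]! = l₁[i]! := by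
  rw [getElem!_pos (l₁ ++ l₂) i (by simp; omega), getElem!_pos l₁ i h, List.getElem_append_left]

lemma getbang_append_right (l₁ l₂ : List ℕ) (i : ℕ) (h1 : l₁.length ≤ i) (h2 : i < l₁.length + l₂.length) :
    (l₁ ++ l₂)[i]! = l₂[i - l₁.length]! := by
  rw [getElem!_pos (l₁ ++ l₂) i (by simp; omega), getElem!_pos l₂ _ (by omega), List.getElem_append_right h1]

lemma getbang_append_zero_last (l : List ℕ) : (l ++ [0])[l.length]! = 0 := by
  rw [getbang_append_right l [0] l.length le_rfl (by simp)]
  simp [getElem!_pos]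

lemma avl_append_zero (l : List ℕ) : AvL (l ++ [0]) ↔ AvL l := by
  constructor
  · rintro ⟨h1, h2⟩
    constructor
    · intro i j hij hj hocc
      refine h1 i j hij (by simp; omega) ?_
      rwa [getbang_append_left l [0] i (by omega), getbang_append_left l [0] j (by omega),
        getbang_append_left l [0] (j+1) (by omega)]
    · intro i j hij hj hocc
      refine h2 i j hij (by simp; omega) ?_
      rwa [getbang_append_left l [0] i (by omega), getbang_append_left l [0] j (by omega),
        getbang_append_left l [0] (i+1) (by omega)]
  · rintro ⟨h1, h2⟩
    constructor
    · intro i j hij hj hocc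
      simp only [List.length_append, List.length_singleton] at hj
      rcases Nat.lt_or_ge (j+1) l.length with hj' | hj'
      · rw [getbang_append_left l [0] i (by omega), getbang_append_left l [0] j (by omega),
          getbang_append_left l [0] (j+1) (by omega)] at hocc
        exact h1 i j hij hj' hocc
      · have hje : j + 1 = l.length := by omega
        rw [hje, getbang_append_zero_last] at hocc
        omega
    · intro i j hij hj hocc
      simp only [List.length_append, List.length_singleton] at hj
      rcases Nat.lt_or_ge j l.length with hj' | hj'
      · rw [getbang_append_left l [0] i (by omega), getbang_append_left l [0] j (by omega),
          getbang_append_left l [0] (i+1) (by omega)] at hocc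
        exact h2 i j hij hj' hocc
      · have hje : j = l.length := by omega
        rw [hje, getbang_append_zero_last] at hocc
        omega

section Structure

variable (B S : List ℕ) (x : ℕ)

lemma g1 (i : ℕ) (h : i < B.length) : (B ++ S ++ [0, x])[i]! = B[i]! := by
  rw [List.append_assoc] at *
  exact getbang_append_left B (S ++ [0,x]) i h

lemma g2 (i : ℕ) (h1 : B.length ≤ i) (h2 : i < B.length + S.length) :
    (B ++ S ++ [0, x])[i]! = S[i - B.length]! := by
  rw [List.append_assoc]
  rw [getbang_append_right B (S ++ [0,x]) i h1 (by simp only [List.length_append, List.length_cons, List.length_nil]; omega)]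
  exact getbang_append_left S [0,x] _ (by omega)

lemma g3 : (B ++ S ++ [0, x])[B.length + S.length]! = 0 := by
  rw [List.append_assoc]
  rw [getbang_append_right B (S ++ [0,x]) _ (by omega) (by simp only [List.length_append, List.length_cons, List.length_nil]; omega)]
  rw [getbang_append_right S [0,x] _ (by omega) (by simp only [List.length_append, List.length_cons, List.length_nil]; omega)]
  simp [getElem!_pos]

lemma g4 : (B ++ S ++ [0, x])[B.length + S.length + 1]! = x := by
  rw [List.append_assoc]
  rw [getbang_append_right B (S ++ [0,x]) _ (by omega) (by simp only [List.length_append, List.length_cons, List.length_nil]; omega)]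
  rw [getbang_append_right S [0,x] _ (by omega) (by simp only [List.length_append, List.length_cons, List.length_nil]; omega)]
  have h2 : B.length + S.length + 1 - B.length - S.length = 1 := by omega
  rw [h2]
  simp [getElem!_pos]

lemma avl_structure (hB : ∀ v ∈ B, x < v) (hS : ∀ v ∈ S, v < x) :
    AvL (B ++ S ++ [0, x]) ↔ AvL B ∧ AvL S := by
  have hlen : (B ++ S ++ [0, x]).length = B.length + S.length + 2 := by
    simp only [List.length_append, List.length_cons, List.length_nil]
  have memB : ∀ i, i < B.length → x < B[i]! := fun i h => by
    rw [getElem!_pos B i h]; exact hB _ (List.getElem_mem h)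
  have memS : ∀ i, i < S.length → S[i]! < x := fun i h => by
    rw [getElem!_pos S i h]; exact hS _ (List.getElem_mem h)
  constructor
  · rintro ⟨h1, h2⟩
    refine ⟨⟨?_, ?_⟩, ?_, ?_⟩
    · intro i j hij hj hocc
      refine h1 i j hij (by rw [hlen]; omega) ?_
      rwa [g1 B S x i (by omega), g1 B S x j (by omega), g1 B S x (j+1) (by omega)]
    · intro i j hij hj hocc
      refine h2 i j hij (by rw [hlen]; omega) ?_
      rwa [g1 B S x i (by omega), g1 B S x j (by omega), g1 B S x (i+1) (by omega)]
    · intro i j hij hj hocc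
      refine h1 (B.length + i) (B.length + j) (by omega) (by rw [hlen]; omega) ?_
      have e1 := g2 B S x (B.length + i) (by omega) (by omega)
      have e2 := g2 B S x (B.length + j) (by omega) (by omega)
      have e3 := g2 B S x (B.length + j + 1) (by omega) (by omega)
      simp only [Nat.add_sub_cancel_left] at e1 e2 e3
      rw [show B.length + j + 1 - B.length = j + 1 by omega] at e3
      rw [e1, e2, e3]
      exact hocc
    · intro i j hij hj hocc
      refine h2 (B.length + i) (B.length + j) (by omega) (by rw [hlen]; omega) ?_
      have e1 := g2 B S x (B.length + i) (by omega) (by omega)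
      have e2 := g2 B S x (B.length + j) (by omega) (by omega)
      have e3 := g2 B S x (B.length + i + 1) (by omega) (by omega)
      simp only [Nat.add_sub_cancel_left] at e1 e2 e3
      rw [show B.length + i + 1 - B.length = i + 1 by omega] at e3
      rw [e1, e2, e3]
      exact hocc
  · rintro ⟨⟨hB1, hB2⟩, hS1, hS2⟩
    constructor
    · -- no 1-23 occurrence
      intro i j hij hj hocc
      rw [hlen] at hj
      obtain ⟨ho1, ho2⟩ := hocc
      rcases Nat.lt_or_ge (j+1) (B.length + S.length) with hc | hc
      · rcases Nat.lt_or_ge (j+1) B.length with hd | hd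
        · -- all in B
          rw [g1 B S x i (by omega), g1 B S x j (by omega)] at ho1
          rw [g1 B S x j (by omega), g1 B S x (j+1) (by omega)] at ho2
          exact hB1 i j hij (by omega) ⟨ho1, ho2⟩
        · rcases Nat.lt_or_ge j B.length with he | he
          · -- j in B, j+1 in S : descent by values
            rw [g1 B S x j he] at ho2
            rw [g2 B S x (j+1) hd hc] at ho2
            have := memB j he
            have := memS (j+1-B.length) (by omega)
            omega
          · -- j, j+1 in S
            rcases Nat.lt_or_ge i B.length with hf | hf
            · rw [g1 B S x i hf, g2 B S x j he (by omega)] at ho1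
              have := memB i hf
              have := memS (j - B.length) (by omega)
              omega
            · rw [g2 B S x i hf (by omega), g2 B S x j he (by omega)] at ho1
              rw [g2 B S x j he (by omega)] at ho2
              rw [g2 B S x (j+1) (by omega) hc] at ho2
              refine hS1 (i - B.length) (j - B.length) (by omega) (by omega) ⟨ho1, ?_⟩
              rwa [show j - B.length + 1 = j + 1 - B.length by omega]
      · rcases Nat.lt_or_ge (j+1) (B.length + S.length + 1) with hc2 | hc2
        · -- j+1 = lB + lS : l[j+1]! = 0
          have hje : j + 1 = B.length + S.length := by omega
          rw [hje, g3] at ho2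
          omega
        · -- j+1 = lB + lS + 1, j = lB + lS : l[j]! = 0
          have hje : j = B.length + S.length := by omega
          rw [hje, g3] at ho1
          omega
    · -- no 13-2 occurrence
      intro i j hij hj hocc
      rw [hlen] at hj
      obtain ⟨ho1, ho2⟩ := hocc
      rcases Nat.lt_or_ge (i+1) B.length with hc | hc
      · -- i, i+1 in B; then l[j]! must be > x but j is to the right
        rw [g1 B S x i (by omega)] at ho1
        have hxi := memB i (by omega)
        rcases Nat.lt_or_ge j B.length with hd | hd
        · rw [g1 B S x j hd] at ho1
          rw [g1 B S x j hd, g1 B S x (i+1) hc] at ho2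
          exact hB2 i j hij (by omega) ⟨ho1, ho2⟩
        · -- l[j]! ≤ x always on the right
          have : (B ++ S ++ [0,x])[j]! ≤ x := by
            rcases Nat.lt_or_ge j (B.length + S.length) with he | he
            · rw [g2 B S x j hd he]; have := memS (j - B.length) (by omega); omega
            · rcases Nat.lt_or_ge j (B.length + S.length + 1) with hf | hf
              · rw [show j = B.length + S.length by omega, g3]; omega
              · rw [show j = B.length + S.length + 1 by omega, g4]
          omega
      · rcases Nat.lt_or_ge (i+1) (B.length + S.length) with hc2 | hc2
        · rcases Nat.lt_or_ge i B.length with hd | hd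
          · -- i in B (i+1 = lB boundary, lS > 0): l[i]! > x, l[i+1]! = S value < x
            have hxi := memB i hd
            rw [g1 B S x i hd] at ho1
            rw [g2 B S x (i+1) (by omega) hc2] at ho2
            have := memS (i+1-B.length) (by omega)
            omega
          · -- i, i+1 in S
            rw [g2 B S x i hd (by omega)] at ho1
            rw [g2 B S x (i+1) (by omega) hc2] at ho2
            have hi1 := memS (i+1-B.length) (by omega)
            rcases Nat.lt_or_ge j (B.length + S.length) with he | he
            · rw [g2 B S x j (by omega) he] at ho1
              rw [g2 B S x j (by omega) he] at ho2
              refine hS2 (i - B.length) (j - B.length) (by omega) (by omega) ⟨ho1, ?_⟩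
              rwa [show i - B.length + 1 = i + 1 - B.length by omega]
            · rcases Nat.lt_or_ge j (B.length + S.length + 1) with hf | hf
              · rw [show j = B.length + S.length by omega, g3] at ho1; omega
              · rw [show j = B.length + S.length + 1 by omega, g4] at ho1
                rw [show j = B.length + S.length + 1 by omega, g4] at ho2
                omega
        · rcases Nat.lt_or_ge (i+1) (B.length + S.length + 1) with hc3 | hc3
          · -- i+1 = lB+lS : l[i+1]! = 0
            rw [show i + 1 = B.length + S.length by omega, g3] at ho2
            omega
          · -- i+1 = lB+lS+1 : j > i+1 impossible
            omega

end Structure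

lemma getbang_cons_zero (a : ℕ) (t : List ℕ) : (a :: t)[0]! = a := by
  rw [getElem!_pos (a :: t) 0 (by simp)]
  simp

lemma getbang_cons_succ (a : ℕ) (t : List ℕ) (i : ℕ) (h : i < t.length) :
    (a :: t)[i+1]! = t[i]! := by
  rw [getElem!_pos (a :: t) (i+1) (by simp; omega), getElem!_pos t i h, List.getElem_cons_succ]

/-- splitting a list with no adjacent (small, big) pair around `x` -/
lemma split_lemma (x : ℕ) : ∀ (α : List ℕ), (∀ v ∈ α, v ≠ x) →
    (∀ i, i + 1 < α.length → α[i]! < x → x < α[i+1]! → False) →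
    ∃ B S, α = B ++ S ∧ (∀ v ∈ B, x < v) ∧ (∀ v ∈ S, v < x)
  | [], _, _ => ⟨[], [], rfl, by simp, by simp⟩
  | a :: t, hne, hadj => by
    obtain ⟨B, S, ht, hB, hS⟩ := split_lemma x t
      (fun v hv => hne v (List.mem_cons_of_mem _ hv))
      (fun i hi h1 h2 => by
        refine hadj (i+1) (by simp; omega) ?_ ?_
        · rwa [getbang_cons_succ a t i (by omega)]
        · rwa [getbang_cons_succ a t (i+1) (by omega)])
    rcases Nat.lt_or_ge a x with hax | hax
    · -- a < x : B must be empty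
      cases B with
      | nil =>
        refine ⟨[], a :: S, by simp [ht], by simp, ?_⟩
        intro v hv
        rcases List.mem_cons.mp hv with h | h
        · omega
        · exact hS v h
      | cons b B' =>
        exfalso
        have hb : x < b := hB b (List.mem_cons_self)
        have h0 : t[0]! = b := by
          rw [ht, getElem!_pos _ 0 (by simp)]
          simp
        refine hadj 0 (by simp [ht]) ?_ ?_
        · rwa [getbang_cons_zero]
        · rw [getbang_cons_succ a t 0 (by rw [ht]; simp), h0]; exact hb
    · have hax' : x < a := by have := hne a (List.mem_cons_self); omega
      refine ⟨a :: B, S, by simp [ht], ?_, hS⟩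
      intro v hv
      rcases List.mem_cons.mp hv with h | h
      · omega
      · exact hB v h

/-- 0 must be in the last two positions of an avoider -/
lemma zero_near_end (l : List ℕ) (hnd : l.Nodup) (hAv : AvL l) (p : ℕ)
    (hp : p + 2 < l.length) (h0 : l[p]! = 0) : False := by
  obtain ⟨h1, h2⟩ := hAv
  set a := l[p+1]! with ha
  set b := l[p+2]! with hb
  have hab : a ≠ b := by
    rw [ha, hb, getElem!_pos l (p+1) (by omega), getElem!_pos l (p+2) (by omega)]
    intro hh
    have := (List.Nodup.getElem_inj_iff hnd (hi := by omega) (hj := by omega)).mp hh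
    omega
  have hpos : ∀ q, q < l.length → q ≠ p → 0 < l[q]! := by
    intro q hq hqp
    rw [getElem!_pos l q hq]
    rw [getElem!_pos l p (by omega)] at h0
    rcases Nat.eq_zero_or_pos l[q] with hz | hz
    · exact absurd ((List.Nodup.getElem_inj_iff hnd (hi := hq) (hj := by omega)).mp
        (hz.trans h0.symm)) hqp
    · exact hz
  have hA : 0 < a := ha ▸ hpos (p+1) (by omega) (by omega)
  have hBp : 0 < b := hb ▸ hpos (p+2) (by omega) (by omega)
  rcases Nat.lt_or_ge a b with hh | hh
  · exact h1 p (p+1) (by omega) (by omega) ⟨by rw [h0]; omega, hh⟩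
  · exact h2 p (p+2) (by omega) (by omega) ⟨by rw [h0]; omega, by omega⟩

lemma decomposition (n : ℕ) (l : List ℕ) (hperm : l ~ List.range (n+1)) (hAv : AvL l) :
    (∃ a : List ℕ, a ~ List.range n ∧ AvL a ∧ l = a.map (· + 1) ++ [0]) ∨
    (∃ k, k < n ∧ ∃ b s : List ℕ, b ~ List.range (n-1-k) ∧ s ~ List.range k ∧ AvL b ∧ AvL s ∧
      l = b.map (· + (k+2)) ++ s.map (· + 1) ++ [0, k+1]) := by
  have hlen : l.length = n + 1 := hperm.length_eq.trans List.length_range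
  have hnd : l.Nodup := hperm.nodup_iff.mpr List.nodup_range
  have hmem : ∀ v, v ∈ l ↔ v < n + 1 := fun v => hperm.mem_iff.trans List.mem_range
  obtain ⟨p, hp, hpe⟩ := List.mem_iff_getElem.mp ((hmem 0).mpr (by omega))
  have hpe' : l[p]! = 0 := by rw [getElem!_pos l p hp]; exact hpe
  have hp2 : l.length ≤ p + 2 := by
    by_contra hc
    exact zero_near_end l hnd hAv p (by omega) hpe'
  rcases Nat.lt_or_ge p n with hpn | hpn
  · -- p = n - 1 : case l = B ++ S ++ [0, x]
    right
    have hpn' : p = n - 1 := by omega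
    have hn1 : 1 ≤ n := by omega
    set x := l[p+1]! with hx
    have hxget : l[p+1]! = l[p+1]'(by omega) := getElem!_pos l (p+1) (by omega)
    have hxl : x ∈ l := by rw [hx, hxget]; exact List.getElem_mem _
    have hxn : x < n + 1 := (hmem x).mp hxl
    have hx0 : x ≠ 0 := by
      rw [hx, hxget]
      intro hc
      have := (List.Nodup.getElem_inj_iff hnd (hi := by omega) (hj := hp)).mp
        (hc.trans hpe.symm)
      omega
    set α := l.take p with hα
    have hαlen : α.length = p := by
      rw [hα, List.length_take]; omega
    have hdecomp : l = α ++ [0, x] := by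
      conv_lhs => rw [← List.take_append_drop p l]
      congr 1
      rw [List.drop_eq_getElem_cons (by omega), hpe,
        List.drop_eq_getElem_cons (show p+1 < l.length by omega)]
      rw [show l.drop (p+1+1) = [] from List.drop_eq_nil_of_le (by omega)]
      rw [← hxget, ← hx]
    have hndα : α.Nodup ∧ [0, x].Nodup ∧ α.Disjoint [0, x] := by
      rw [← List.nodup_append']
      rw [← hdecomp]; exact hnd
    have h0α : (0:ℕ) ∉ α := fun hc => hndα.2.2 hc (by simp)
    have hxα : x ∉ α := fun hc => hndα.2.2 hc (by simp)
    have hgl : ∀ i, i < p → l[i]! = α[i]! := by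
      intro i hi
      rw [hdecomp, getbang_append_left α [0,x] i (by omega)]
    have hgx : l[p+1]! = x := rfl
    obtain ⟨B, S, hBS, hBv, hSv⟩ := split_lemma x α (fun v hv hc => hxα (hc ▸ hv))
      (by
        intro i hi h1 h2
        rw [hαlen] at hi
        refine hAv.2 i (p+1) (by omega) (by omega) ⟨?_, ?_⟩
        · rw [hgl i (by omega), hgx]; exact h1
        · rw [hgl (i+1) (by omega), hgx]; exact h2)
    -- value bounds for B and S
    have hBl : ∀ v ∈ B, v ∈ l := fun v hv => by
      rw [hdecomp]; exact List.mem_append_left _ (hBS ▸ List.mem_append_left _ hv)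
    have hSl : ∀ v ∈ S, v ∈ l := fun v hv => by
      rw [hdecomp]; exact List.mem_append_left _ (hBS ▸ List.mem_append_right _ hv)
    have hndBS : (B ++ S).Nodup := hBS ▸ hndα.1
    have hBsub : B <+~ (List.range (n-x)).map (· + (x+1)) := by
      refine List.subperm_of_subset ((List.nodup_append.mp hndBS).1) ?_
      intro v hv
      have h1 : x < v := hBv v hv
      have h2 : v < n + 1 := (hmem v).mp (hBl v hv)
      exact List.mem_map.mpr ⟨v - (x+1), List.mem_range.mpr (by omega), by omega⟩
    have hSsub : S <+~ (List.range (x-1)).map (· + 1) := by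
      refine List.subperm_of_subset ((List.nodup_append.mp hndBS).2.1) ?_
      intro v hv
      have h1 : v < x := hSv v hv
      have h2 : v ≠ 0 := fun hc => h0α (hBS ▸ List.mem_append_right _ (hc ▸ hv))
      exact List.mem_map.mpr ⟨v - 1, List.mem_range.mpr (by omega), by omega⟩
    have hBle : B.length ≤ n - x := by
      have := hBsub.length_le
      rwa [List.length_map, List.length_range] at this
    have hSle : S.length ≤ x - 1 := by
      have := hSsub.length_le
      rwa [List.length_map, List.length_range] at this
    have hsum : B.length + S.length = n - 1 := by
      have : (B ++ S).length = α.length := by rw [← hBS]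
      rw [List.length_append, hαlen] at this
      omega
    have hBlen : B.length = n - x := by omega
    have hSlen : S.length = x - 1 := by omega
    have hBperm : B ~ (List.range (n-x)).map (· + (x+1)) :=
      hBsub.perm_of_length_le (by rw [List.length_map, List.length_range]; omega)
    have hSperm : S ~ (List.range (x-1)).map (· + 1) :=
      hSsub.perm_of_length_le (by rw [List.length_map, List.length_range]; omega)
    -- the patterns
    set b := B.map (· - (x+1)) with hb
    set s := S.map (· - 1) with hs
    have hBb : B = b.map (· + (x+1)) := by
      rw [hb, List.map_map]
      simp only [Function.comp_def]
      have : ∀ v ∈ B, v - (x+1) + (x+1) = v := fun v hv => by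
        have := hBv v hv; omega
      rw [List.map_congr_left this, List.map_id']
    have hSs : S = s.map (· + 1) := by
      rw [hs, List.map_map]
      simp only [Function.comp_def]
      have : ∀ v ∈ S, v - 1 + 1 = v := fun v hv => by
        have h1 : v ≠ 0 := fun hc => h0α (hBS ▸ List.mem_append_right _ (hc ▸ hv))
        omega
      rw [List.map_congr_left this, List.map_id']
    have hbperm : b ~ List.range (n-x) := by
      have := hBperm.map (· - (x+1))
      rw [← hb] at this
      refine this.trans ?_
      rw [List.map_map]
      simp only [Function.comp_def]
      have : ∀ v ∈ List.range (n-x), (v + (x+1)) - (x+1) = v := fun v _ => by omega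
      rw [List.map_congr_left this, List.map_id']
    have hsperm : s ~ List.range (x-1) := by
      have := hSperm.map (· - 1)
      rw [← hs] at this
      refine this.trans ?_
      rw [List.map_map]
      simp only [Function.comp_def]
      have : ∀ v ∈ List.range (x-1), (v + 1) - 1 = v := fun v _ => by omega
      rw [List.map_congr_left this, List.map_id']
    -- avoidance
    have hlBS : l = B ++ S ++ [0, x] := by rw [hdecomp, hBS]
    have hAvBS : AvL B ∧ AvL S := (avl_structure B S x hBv hSv).mp (hlBS ▸ hAv)
    have hAvb : AvL b := (avl_map_add b (x+1)).mp (hBb ▸ hAvBS.1)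
    have hAvs : AvL s := (avl_map_add s 1).mp (hSs ▸ hAvBS.2)
    refine ⟨x - 1, by omega, b, s, ?_, hsperm, hAvb, hAvs, ?_⟩
    · rw [show n - 1 - (x-1) = n - x by omega]; exact hbperm
    · rw [show x - 1 + 2 = x + 1 by omega, show x - 1 + 1 = x by omega,
        ← hBb, ← hSs, ← hlBS]
  · -- p = n : case l = a ++ [0]
    left
    have hpn' : p = n := by omega
    set α := l.take n with hα
    have hdecomp : l = α ++ [0] := by
      conv_lhs => rw [← List.take_append_drop n l]
      congr 1
      rw [← hpn', List.drop_eq_getElem_cons (by omega), hpe]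
      rw [show l.drop (p+1) = [] from List.drop_eq_nil_of_le (by omega)]
    have hndα : α.Nodup ∧ [0].Nodup ∧ α.Disjoint [0] := by
      rw [← List.nodup_append']; rw [← hdecomp]; exact hnd
    have h0α : (0:ℕ) ∉ α := fun hc => hndα.2.2 hc (by simp)
    have hαperm : α ~ (List.range n).map (· + 1) := by
      have h1 : α ++ [0] ~ 0 :: α := List.perm_append_singleton 0 α
      have h2 : l ~ 0 :: α := hdecomp ▸ h1
      have h3 : (0 :: α : List ℕ) ~ List.range (n+1) := h2.symm.trans hperm
      rw [List.range_succ_eq_map] at h3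
      exact (List.perm_cons 0).mp (by simpa using h3)
    set a := α.map (· - 1) with ha2
    have hαa : α = a.map (· + 1) := by
      rw [ha2, List.map_map]
      simp only [Function.comp_def]
      have : ∀ v ∈ α, v - 1 + 1 = v := fun v hv => by
        have : v ≠ 0 := fun hc => h0α (hc ▸ hv)
        omega
      rw [List.map_congr_left this, List.map_id']
    have haperm : a ~ List.range n := by
      have := hαperm.map (· - 1)
      rw [← ha2] at this
      refine this.trans ?_
      rw [List.map_map]
      simp only [Function.comp_def]
      have : ∀ v ∈ List.range n, (v + 1) - 1 = v := fun v _ => by omega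
      rw [List.map_congr_left this, List.map_id']
    have hAvα : AvL α := (avl_append_zero α).mp (hdecomp ▸ hAv)
    have hAva : AvL a := (avl_map_add a 1).mp (hαa ▸ hAvα)
    exact ⟨a, haperm, hAva, by rw [← hαa, ← hdecomp]⟩

lemma mk1_perm (n : ℕ) (a : List ℕ) (h : a ~ List.range n) :
    a.map (· + 1) ++ [0] ~ List.range (n+1) := by
  have h1 : a.map (· + 1) ++ [0] ~ 0 :: a.map (· + 1) := List.perm_append_singleton 0 _
  refine h1.trans ?_
  rw [List.range_succ_eq_map]
  exact (h.map _).cons 0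

lemma mk1_avl (a : List ℕ) (h : AvL a) : AvL (a.map (· + 1) ++ [0]) :=
  (avl_append_zero _).mpr ((avl_map_add a 1).mpr h)

lemma mk2_perm (n k : ℕ) (hk : k < n) (b s : List ℕ)
    (hb : b ~ List.range (n-1-k)) (hs : s ~ List.range k) :
    b.map (· + (k+2)) ++ s.map (· + 1) ++ [0, k+1] ~ List.range (n+1) := by
  set B0 := (List.range (n-1-k)).map (· + (k+2)) with hB0
  set S0 := (List.range k).map (· + 1) with hS0
  have h1 : b.map (· + (k+2)) ++ s.map (· + 1) ++ [0, k+1] ~ B0 ++ S0 ++ [0, k+1] :=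
    ((hb.map _).append (hs.map _)).append_right _
  refine h1.trans ?_
  have h2 : B0 ++ S0 ++ [0, k+1] ~ B0 ++ ((0 :: S0) ++ [k+1]) := by
    rw [List.append_assoc]
    refine List.Perm.append_left B0 ?_
    show S0 ++ ([0] ++ [k+1]) ~ _
    rw [← List.append_assoc]
    exact (List.perm_append_singleton 0 S0).append_right [k+1]
  refine h2.trans ?_
  refine (List.perm_append_comm).trans ?_
  have h3 : List.range (n+1) = ((0 :: S0) ++ [k+1]) ++ B0 := by
    have e : n + 1 = (k+2) + (n-1-k) := by omega
    rw [e, List.range_add, List.range_succ, List.range_succ_eq_map, ← hS0]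
    congr 1
    rw [hB0]
    refine List.map_congr_left ?_
    intro v _
    omega
  rw [h3]

lemma mk2_avl (n k : ℕ) (b s : List ℕ) (hs : s ~ List.range k)
    (hvb : AvL b) (hvs : AvL s) :
    AvL (b.map (· + (k+2)) ++ s.map (· + 1) ++ [0, k+1]) := by
  refine (avl_structure _ _ (k+1) ?_ ?_).mpr
    ⟨(avl_map_add b (k+2)).mpr hvb, (avl_map_add s 1).mpr hvs⟩
  · intro v hv
    obtain ⟨w, _, hw⟩ := List.mem_map.mp hv
    omega
  · intro v hv
    obtain ⟨w, hwmem, hw⟩ := List.mem_map.mp hv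
    have : w < k := List.mem_range.mp (hs.mem_iff.mp hwmem)
    omega

/-- the disjoint union indexing avoiders of `[n+1]` -/
abbrev T (n : ℕ) : Type := PL n ⊕ (Σ k : Fin n, PL (n - 1 - (k:ℕ)) × PL (k:ℕ))

/-- the recursive construction map -/
def F (n : ℕ) : T n → PL (n+1)
  | .inl a => ⟨a.1.map (· + 1) ++ [0], mk1_perm n a.1 a.2.1, mk1_avl a.1 a.2.2⟩
  | .inr ⟨k, b, s⟩ => ⟨b.1.map (· + ((k:ℕ)+2)) ++ s.1.map (· + 1) ++ [0, (k:ℕ)+1],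
      mk2_perm n k k.2 b.1 s.1 b.2.1 s.2.1,
      mk2_avl n k b.1 s.1 s.2.1 b.2.2 s.2.2⟩

lemma F_bijective (n : ℕ) : Function.Bijective (F n) := by
  constructor
  · rintro (⟨a, hap, hav⟩ | ⟨k, ⟨b, hbp, hbv⟩, ⟨s, hsp, hsv⟩⟩)
      (⟨a', hap', hav'⟩ | ⟨k', ⟨b', hbp', hbv'⟩, ⟨s', hsp', hsv'⟩⟩) heq <;>
      simp only [F, Subtype.mk.injEq] at heq
    · -- inl inl
      have hlen : (a.map (· + 1)).length = (a'.map (· + 1)).length := by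
        rw [List.length_map, List.length_map, hap.length_eq, hap'.length_eq]
      have := (List.append_inj heq hlen).1
      have haa : a = a' := List.map_injective_iff.mpr (fun u v h => by omega) this
      subst haa
      rfl
    · -- inl inr : impossible, compare entry at position n
      exfalso
      have e1 : (a.map (· + 1) ++ [0])[n]! = 0 := by
        have hl : (a.map (· + 1)).length = n := by
          rw [List.length_map, hap.length_eq, List.length_range]
        rw [← hl]; exact getbang_append_zero_last _
      have e2 : (b'.map (· + ((k':ℕ)+2)) ++ s'.map (· + 1) ++ [0, (k':ℕ)+1])[n]! = (k':ℕ)+1 := by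
        have hl : (b'.map (· + ((k':ℕ)+2))).length + (s'.map (· + 1)).length = n - 1 := by
          rw [List.length_map, List.length_map, hbp'.length_eq, hsp'.length_eq,
            List.length_range, List.length_range]
          have := k'.2; omega
        have := g4 (b'.map (· + ((k':ℕ)+2))) (s'.map (· + 1)) ((k':ℕ)+1)
        rw [hl] at this
        rwa [show n - 1 + 1 = n by have := k'.2; omega] at this
      rw [heq, e2] at e1
      omega
    · -- inr inl : impossible
      exfalso
      have e1 : (a'.map (· + 1) ++ [0])[n]! = 0 := by
        have hl : (a'.map (· + 1)).length = n := by
          rw [List.length_map, hap'.length_eq, List.length_range]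
        rw [← hl]; exact getbang_append_zero_last _
      have e2 : (b.map (· + ((k:ℕ)+2)) ++ s.map (· + 1) ++ [0, (k:ℕ)+1])[n]! = (k:ℕ)+1 := by
        have hl : (b.map (· + ((k:ℕ)+2))).length + (s.map (· + 1)).length = n - 1 := by
          rw [List.length_map, List.length_map, hbp.length_eq, hsp.length_eq,
            List.length_range, List.length_range]
          have := k.2; omega
        have := g4 (b.map (· + ((k:ℕ)+2))) (s.map (· + 1)) ((k:ℕ)+1)
        rw [hl] at this
        rwa [show n - 1 + 1 = n by have := k.2; omega] at this
      rw [← heq, e2] at e1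
      omega
    · -- inr inr
      have ekk : (k:ℕ) = (k':ℕ) := by
        have e2 : ∀ (k0 : Fin n) (b0 s0 : List ℕ), b0 ~ List.range (n-1-(k0:ℕ)) →
            s0 ~ List.range (k0:ℕ) →
            (b0.map (· + ((k0:ℕ)+2)) ++ s0.map (· + 1) ++ [0, (k0:ℕ)+1])[n]! = (k0:ℕ)+1 := by
          intro k0 b0 s0 hb0 hs0
          have hl : (b0.map (· + ((k0:ℕ)+2))).length + (s0.map (· + 1)).length = n - 1 := by
            rw [List.length_map, List.length_map, hb0.length_eq, hs0.length_eq,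
              List.length_range, List.length_range]
            have := k0.2; omega
          have := g4 (b0.map (· + ((k0:ℕ)+2))) (s0.map (· + 1)) ((k0:ℕ)+1)
          rw [hl] at this
          rwa [show n - 1 + 1 = n by have := k0.2; omega] at this
        have h1 := e2 k b s hbp hsp
        have h2 := e2 k' b' s' hbp' hsp'
        rw [heq, h2] at h1
        omega
      have ek : k = k' := Fin.ext ekk
      subst ek
      have hlen1 : (b.map (· + ((k:ℕ)+2)) ++ s.map (· + 1)).length
          = (b'.map (· + ((k:ℕ)+2)) ++ s'.map (· + 1)).length := by
        simp only [List.length_append, List.length_map, hbp.length_eq, hsp.length_eq,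
          hbp'.length_eq, hsp'.length_eq]
      obtain ⟨heq1, _⟩ := List.append_inj heq hlen1
      have hlen2 : (b.map (· + ((k:ℕ)+2))).length = (b'.map (· + ((k:ℕ)+2))).length := by
        simp only [List.length_map, hbp.length_eq, hbp'.length_eq]
      obtain ⟨heqb, heqs⟩ := List.append_inj heq1 hlen2
      have hb : b = b' := List.map_injective_iff.mpr (fun u v h => by omega) heqb
      have hs : s = s' := List.map_injective_iff.mpr (fun u v h => by omega) heqs
      subst hb; subst hs
      rfl
  · rintro ⟨l, hperm, havl⟩
    rcases decomposition n l hperm havl with ⟨a, hap, hav, hl⟩ | ⟨k, hk, b, s, hbp, hsp, hbv, hsv, hl⟩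
    · exact ⟨.inl ⟨a, hap, hav⟩, Subtype.ext hl.symm⟩
    · exact ⟨.inr ⟨⟨k, hk⟩, ⟨b, hbp, hbv⟩, ⟨s, hsp, hsv⟩⟩, Subtype.ext hl.symm⟩

/-- `π` contains an occurrence of the generalized pattern `1-23`:
indices `i < j` with `j + 1 ≤ n` and `π i < π j < π (j+1)`. -/
def Occ123 {n : ℕ} (π : Equiv.Perm (Fin n)) : Prop :=
  ∃ i j : Fin n, ∃ hj : (j : ℕ) + 1 < n,
    i < j ∧ π i < π j ∧ π j < π ⟨(j : ℕ) + 1, hj⟩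

/-- `π` contains an occurrence of the generalized pattern `13-2`:
an index `i` with `i + 1 ≤ n` and `j > i + 1` such that `π i < π j < π (i+1)`. -/
def Occ132 {n : ℕ} (π : Equiv.Perm (Fin n)) : Prop :=
  ∃ i j : Fin n, ∃ hi : (i : ℕ) + 1 < n,
    (i : ℕ) + 1 < (j : ℕ) ∧ π i < π j ∧ π j < π ⟨(i : ℕ) + 1, hi⟩

/-- the list of values of a permutation -/
def toL {n : ℕ} (π : Equiv.Perm (Fin n)) : List ℕ := List.ofFn (fun i => (π i : ℕ))

lemma toL_length {n : ℕ} (π : Equiv.Perm (Fin n)) : (toL π).length = n := by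
  simp [toL]

lemma toL_get {n : ℕ} (π : Equiv.Perm (Fin n)) (i : ℕ) (h : i < n) :
    (toL π)[i]! = (π ⟨i, h⟩ : ℕ) := by
  rw [toL, getElem!_pos (List.ofFn _) i (by simpa using h), List.getElem_ofFn]

lemma toL_perm {n : ℕ} (π : Equiv.Perm (Fin n)) : toL π ~ List.range n := by
  have hnd : (toL π).Nodup := List.nodup_ofFn.mpr
    (Function.Injective.comp Fin.val_injective π.injective)
  refine (List.subperm_of_subset hnd ?_).perm_of_length_le
    (by rw [toL_length, List.length_range])
  intro v hv
  obtain ⟨i, hi⟩ := List.mem_ofFn.mp hv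
  exact List.mem_range.mpr (hi ▸ (π i).2)

lemma occ_iff {n : ℕ} (π : Equiv.Perm (Fin n)) :
    (¬ Occ123 π ∧ ¬ Occ132 π) ↔ AvL (toL π) := by
  constructor
  · rintro ⟨h1, h2⟩
    constructor
    · intro i j hij hj hocc
      rw [toL_length] at hj
      have hi_lt : i < n := by omega
      have hj_lt : j < n := by omega
      rw [toL_get π i hi_lt, toL_get π j hj_lt, toL_get π (j+1) hj] at hocc
      exact h1 ⟨⟨i, hi_lt⟩, ⟨j, hj_lt⟩, hj, Fin.mk_lt_mk.mpr hij,
        Fin.lt_def.mpr hocc.1, Fin.lt_def.mpr hocc.2⟩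
    · intro i j hij hj hocc
      rw [toL_length] at hj
      have hi_lt : i < n := by omega
      have hi1_lt : i + 1 < n := by omega
      rw [toL_get π i hi_lt, toL_get π j hj, toL_get π (i+1) hi1_lt] at hocc
      exact h2 ⟨⟨i, hi_lt⟩, ⟨j, hj⟩, hi1_lt, hij,
        Fin.lt_def.mpr hocc.1, Fin.lt_def.mpr hocc.2⟩
  · rintro ⟨h1, h2⟩
    constructor
    · rintro ⟨i, j, hj, hij, ho1, ho2⟩
      refine h1 (i:ℕ) (j:ℕ) (Fin.lt_def.mp hij) (by rw [toL_length]; omega) ⟨?_, ?_⟩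
      · rw [toL_get π (i:ℕ) i.2, toL_get π (j:ℕ) j.2]
        exact Fin.lt_def.mp ho1
      · rw [toL_get π (j:ℕ) j.2, toL_get π ((j:ℕ)+1) hj]
        exact Fin.lt_def.mp ho2
    · rintro ⟨i, j, hi, hij, ho1, ho2⟩
      refine h2 (i:ℕ) (j:ℕ) hij (by rw [toL_length]; exact j.2) ⟨?_, ?_⟩
      · rw [toL_get π (i:ℕ) i.2, toL_get π (j:ℕ) j.2]
        exact Fin.lt_def.mp ho1
      · rw [toL_get π (j:ℕ) j.2, toL_get π ((i:ℕ)+1) hi]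
        exact Fin.lt_def.mp ho2

/-- avoiding permutations are equivalent to avoiding lists -/
noncomputable def permEquiv (n : ℕ) :
    {π : Equiv.Perm (Fin n) // ¬ Occ123 π ∧ ¬ Occ132 π} ≃ PL n := by
  refine Equiv.ofBijective (fun p => ⟨toL p.1, toL_perm p.1, (occ_iff p.1).mp p.2⟩) ⟨?_, ?_⟩
  · rintro ⟨π, hπ⟩ ⟨π', hπ'⟩ h
    simp only [Subtype.mk.injEq] at h
    have hfn := List.ofFn_injective h
    exact Subtype.ext (Equiv.ext fun i => Fin.val_injective (congrFun hfn i))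
  · rintro ⟨l, hperm, havl⟩
    have hlen : l.length = n := hperm.length_eq.trans List.length_range
    have hnd : l.Nodup := hperm.nodup_iff.mpr List.nodup_range
    have hbound : ∀ i : Fin n, l[(i:ℕ)]'(by omega) < n := fun i =>
      List.mem_range.mp (hperm.mem_iff.mp (List.getElem_mem _))
    set g : Fin n → Fin n := fun i => ⟨l[(i:ℕ)]'(by omega), hbound i⟩ with hg
    have hg_inj : Function.Injective g := by
      intro i j h
      have : l[(i:ℕ)]'(by omega) = l[(j:ℕ)]'(by omega) := congrArg Fin.val h
      exact Fin.ext ((List.Nodup.getElem_inj_iff hnd).mp this)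
    set π : Equiv.Perm (Fin n) :=
      Equiv.ofBijective g ((Fintype.bijective_iff_injective_and_card g).mpr ⟨hg_inj, rfl⟩)
      with hπ
    have htoL : toL π = l := by
      refine List.ext_getElem (by rw [toL_length, hlen]) (fun i h1 h2 => ?_)
      rw [toL_length] at h1
      have : (toL π)[i]! = (toL π)[i] := getElem!_pos (toL π) i (by rw [toL_length]; omega)
      rw [← this, toL_get π i h1]
      rfl
    exact ⟨⟨π, (occ_iff π).mpr (htoL ▸ havl)⟩, Subtype.ext htoL⟩

noncomputable instance instFinitePL (n : ℕ) : Finite (PL n) :=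
  Finite.of_equiv _ (permEquiv n)

lemma nat_card_sigma {n : ℕ} (f : Fin n → Type) [∀ i, Finite (f i)] :
    Nat.card (Σ i, f i) = ∑ i, Nat.card (f i) := by
  letI : ∀ i, Fintype (f i) := fun i => Fintype.ofFinite _
  simp [Nat.card_eq_fintype_card, Fintype.card_sigma]

lemma avl_nil : AvL ([] : List ℕ) := by
  constructor <;> intro i j h1 h2 <;> simp at h2 <;> omega

lemma card_PL : ∀ n, Nat.card (PL n) = motzkin n := by
  intro n
  induction n using Nat.strong_induction_on with
  | _ n ih =>
    match n with
    | 0 =>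
      rw [show motzkin 0 = 1 by rw [motzkin]]
      rw [Nat.card_eq_one_iff_unique]
      constructor
      · constructor
        intro a b
        refine Subtype.ext ?_
        have ha := a.2.1
        have hb := b.2.1
        have ea : (a : List ℕ) = [] := List.eq_nil_of_length_eq_zero
          (ha.length_eq.trans (List.length_range (n := 0)))
        have eb : (b : List ℕ) = [] := List.eq_nil_of_length_eq_zero
          (hb.length_eq.trans (List.length_range (n := 0)))
        rw [ea, eb]
      · exact ⟨⟨[], by rw [List.range_zero], avl_nil⟩⟩
    | (m+1) =>
      have h1 : Nat.card (T m) = Nat.card (PL (m+1)) :=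
        Nat.card_eq_of_bijective _ (F_bijective m)
      rw [← h1]
      have h2 : Nat.card (T m)
          = Nat.card (PL m) + ∑ k : Fin m, Nat.card (PL (m-1-(k:ℕ))) * Nat.card (PL (k:ℕ)) := by
        rw [show T m = (PL m ⊕ (Σ k : Fin m, PL (m-1-(k:ℕ)) × PL (k:ℕ))) from rfl,
          Nat.card_sum, nat_card_sigma]
        congr 1
        refine Finset.sum_congr rfl (fun k _ => ?_)
        exact Nat.card_prod _ _
      rw [h2, ih m (by omega)]
      have h3 : ∀ k : Fin m, Nat.card (PL (m-1-(k:ℕ))) * Nat.card (PL (k:ℕ))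
          = motzkin (m-1-(k:ℕ)) * motzkin (k:ℕ) := fun k => by
        rw [ih (m-1-(k:ℕ)) (by omega), ih (k:ℕ) (by have := k.2; omega)]
      rw [Finset.sum_congr rfl (fun k _ => h3 k)]
      rw [show motzkin (m+1)
        = motzkin m + ∑ k ∈ (Finset.range m).attach, motzkin (k:ℕ) * motzkin (m-1-(k:ℕ)) by rw [motzkin]]
      congr 1
      rw [Finset.sum_attach (Finset.range m) (fun k => motzkin k * motzkin (m-1-k))]
      rw [← Fin.sum_univ_eq_sum_range (fun k => motzkin k * motzkin (m-1-k)) m]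
      refine Finset.sum_congr rfl (fun k _ => ?_)
      exact Nat.mul_comm _ _

/-- For all `n ≥ 0`, the number of permutations of `[n]` avoiding both
generalized patterns `1-23` and `13-2` equals the `n`-th Motzkin number. -/
theorem count_avoiding_1_23_and_13_2_eq_motzkin (n : ℕ) :
    Nat.card {π : Equiv.Perm (Fin n) // ¬ Occ123 π ∧ ¬ Occ132 π} = motzkin n := by
  rw [Nat.card_congr (permEquiv n), card_PL]
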